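/- For every integer l ≥ 1 and every x ∈ [0,1], the Lidstone polynomial Λ_l satisfies |Λ_l(x)| ≤ 1/(3π^{2l−1}). -/

import Mathlib

open Real Set

-- sin t ≥ t - t^3/6 for t ≥ 0
lemma sin_ge_sub_cube {t : ℝ} (ht : 0 ≤ t) : t - t ^ 3 / 6 ≤ Real.sin t := by
  have hmono : MonotoneOn (fun s : ℝ => Real.sin s - (s - s ^ 3 / 6)) (Ici 0) := by
    apply monotoneOn_of_deriv_nonneg (convex_Ici 0)
    · exact (Real.continuous_sin.sub (by continuity)).continuousOn
    · intro s _
      exact ((Real.differentiable_sin s).sub (by fun_prop)).differentiableWithinAt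
    · intro s hs
      rw [interior_Ici] at hs
      have : deriv (fun s : ℝ => Real.sin s - (s - s ^ 3 / 6)) s
          = Real.cos s - (1 - s ^ 2 / 2) := by
        have h1 : HasDerivAt (fun s : ℝ => Real.sin s - (s - s ^ 3 / 6))
            (Real.cos s - (1 - 3 * s ^ 2 / 6)) s := by
          have := (Real.hasDerivAt_sin s).sub
            (((hasDerivAt_id s).sub (((hasDerivAt_pow 3 s)).div_const 6)))
          convert! this using 1
        rw [h1.deriv]; ring_nf
      rw [this]
      have := Real.one_sub_sq_div_two_le_cos (x := s)
      linarith
  have := hmono (self_mem_Ici) (mem_Ici.2 ht) ht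
  simpa using this

lemma concave_nonneg (f : ℝ → ℝ) (hf : Differentiable ℝ f)
    (hf' : Differentiable ℝ (deriv f))
    (h2 : ∀ x ∈ Set.Ioo (0:ℝ) 1, deriv (deriv f) x ≤ 0)
    (h0 : f 0 = 0) (h1 : f 1 = 0) :
    ∀ x ∈ Set.Icc (0:ℝ) 1, 0 ≤ f x := by
  have hconc : ConcaveOn ℝ (Icc (0:ℝ) 1) f := by
    apply concaveOn_of_deriv2_nonpos (convex_Icc 0 1) hf.continuous.continuousOn
      hf.differentiableOn hf'.differentiableOn
    intro x hx
    rw [interior_Icc] at hx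
    simpa [Function.iterate_succ, Function.iterate_zero] using h2 x hx
  intro x hx
  obtain ⟨hx0, hx1⟩ := hx
  have := hconc.2 (show (0:ℝ) ∈ Icc (0:ℝ) 1 by norm_num)
    (show (1:ℝ) ∈ Icc (0:ℝ) 1 by norm_num)
    (show (0:ℝ) ≤ 1 - x by linarith) hx0 (show (1 - x) + x = 1 by ring)
  simpa [h0, h1, smul_eq_mul] using this

lemma abs_le_of_bvp (u w : ℝ → ℝ)
    (hu : Differentiable ℝ u) (hu' : Differentiable ℝ (deriv u))
    (hw : Differentiable ℝ w) (hw' : Differentiable ℝ (deriv w))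
    (hcomp : ∀ x ∈ Set.Ioo (0:ℝ) 1, |deriv (deriv u) x| ≤ -(deriv (deriv w) x))
    (hu0 : u 0 = 0) (hu1 : u 1 = 0) (hw0 : w 0 = 0) (hw1 : w 1 = 0) :
    ∀ x ∈ Set.Icc (0:ℝ) 1, |u x| ≤ w x := by
  have hdsub : deriv (fun x => w x - u x) = fun x => deriv w x - deriv u x :=
    funext fun x => deriv_sub (hw x) (hu x)
  have hdadd : deriv (fun x => w x + u x) = fun x => deriv w x + deriv u x :=
    funext fun x => deriv_add (hw x) (hu x)
  have h1 : ∀ x ∈ Set.Icc (0:ℝ) 1, 0 ≤ w x - u x := by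
    apply concave_nonneg _ (hw.fun_sub hu) (by rw [hdsub]; exact hw'.sub hu')
    · intro x hx
      rw [hdsub, deriv_fun_sub (hw' x) (hu' x)]
      have := hcomp x hx
      have := abs_le.1 this
      linarith [this.1, this.2]
    · simp [hu0, hw0]
    · simp [hu1, hw1]
  have h2 : ∀ x ∈ Set.Icc (0:ℝ) 1, 0 ≤ w x + u x := by
    apply concave_nonneg _ (hw.fun_add hu) (by rw [hdadd]; exact hw'.add hu')
    · intro x hx
      rw [hdadd, deriv_fun_add (hw' x) (hu' x)]
      have := abs_le.1 (hcomp x hx)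
      linarith [this.1, this.2]
    · simp [hu0, hw0]
    · simp [hu1, hw1]
  intro x hx
  rw [abs_le]
  constructor <;> [linarith [h2 x hx]; linarith [h1 x hx]]

lemma cubic_le_sin {x : ℝ} (h0 : 0 ≤ x) (h1 : x ≤ 1) :
    (x - x ^ 3) / 6 ≤ Real.sin (π * x) / (3 * π) := by
  have hπ3 : (3:ℝ) < π := Real.pi_gt_three
  have hπ315 : π < 3.15 := Real.pi_lt_d2
  have key : π * (x - x ^ 3) ≤ 2 * Real.sin (π * x) := by
    rcases le_or_gt x (1/2) with hx | hx
    · have hs := sin_ge_sub_cube (t := π * x) (by positivity)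
      have hx2 : x ^ 2 ≤ 1/4 := by nlinarith
      have hq : 0 ≤ 1 + x ^ 2 - π ^ 2 * x ^ 2 / 3 := by nlinarith
      nlinarith [mul_nonneg (mul_nonneg Real.pi_pos.le h0) hq]
    · have hsin : Real.sin (π * x) = Real.sin (π * (1 - x)) := by
        rw [show π * (1 - x) = π - π * x by ring, Real.sin_pi_sub]
      have hε : 0 ≤ 1 - x := by linarith
      have hε2 : 1 - x ≤ 1/2 := by linarith
      have hs := sin_ge_sub_cube (t := π * (1 - x)) (by positivity)
      rw [hsin]
      have hpos : 0 ≤ 3 - (1 - x) - π ^ 2 * (1 - x) / 3 := by nlinarith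
      nlinarith [mul_nonneg (mul_nonneg Real.pi_pos.le (sq_nonneg (1 - x))) hpos]
  rw [div_le_div_iff₀ (by norm_num) (by positivity)]
  nlinarith [key]

/-- The defining property of the sequence of Lidstone polynomial functions. -/
def LidstoneProp (Λ : ℕ → ℝ → ℝ) : Prop :=
  (∀ l : ℕ, ∃ P : Polynomial ℝ, ∀ x : ℝ, Λ l x = P.eval x) ∧
  (∀ x : ℝ, Λ 0 x = x) ∧
  (∀ l : ℕ, (∀ x : ℝ, iteratedDeriv 2 (Λ (l + 1)) x = Λ l x) ∧
    Λ (l + 1) 0 = 0 ∧ Λ (l + 1) 1 = 0)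

/-- For `l ≥ 1` and `x ∈ [0,1]`, `|Λ_l(x)| ≤ 1/(3 π^(2l-1))`. -/
theorem lidstone_polynomial_bound (Λ : ℕ → ℝ → ℝ) (hΛ : LidstoneProp Λ)
    (l : ℕ) (hl : 1 ≤ l) (x : ℝ) (hx : x ∈ Set.Icc (0 : ℝ) 1) :
    |Λ l x| ≤ 1 / (3 * Real.pi ^ (2 * l - 1)) := by
  obtain ⟨hpoly, hzero, hrec⟩ := hΛ
  have hdiff : ∀ k, Differentiable ℝ (Λ k) ∧ Differentiable ℝ (deriv (Λ k)) := by
    intro k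
    obtain ⟨P, hP⟩ := hpoly k
    have hfun : Λ k = fun x => P.eval x := funext hP
    rw [hfun]
    refine ⟨P.differentiable, ?_⟩
    have : deriv (fun x => P.eval x) = fun x => P.derivative.eval x :=
      funext fun x => Polynomial.deriv P
    rw [this]
    exact P.derivative.differentiable
  have hdd : ∀ k x, deriv (deriv (Λ (k + 1))) x = Λ k x := by
    intro k x
    have := (hrec k).1 x
    rwa [iteratedDeriv_succ, iteratedDeriv_one] at this
  have main : ∀ m, ∀ x ∈ Set.Icc (0:ℝ) 1,
      |Λ (m + 1) x| ≤ 1 / (3 * π ^ (2 * m + 1)) * Real.sin (π * x) := by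
    intro m
    induction m with
    | zero =>
      have step : ∀ x ∈ Set.Icc (0:ℝ) 1, |Λ 1 x| ≤ (x - x ^ 3) / 6 := by
        have hw1 : deriv (fun x : ℝ => (x - x ^ 3) / 6)
            = fun x => (1 - 3 * x ^ 2) / 6 := by
          funext y
          have h : HasDerivAt (fun x : ℝ => (x - x ^ 3) / 6) ((1 - 3 * y ^ 2) / 6) y := by
            have := ((hasDerivAt_id y).sub (hasDerivAt_pow 3 y)).div_const 6
            convert! this using 1
            all_goals (push_cast; ring)
          exact h.deriv
        apply abs_le_of_bvp (Λ 1) (fun x => (x - x ^ 3) / 6)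
          (hdiff 1).1 (hdiff 1).2 (by fun_prop) (by rw [hw1]; fun_prop)
        · intro y hy
          have hd2 : deriv (deriv (fun x : ℝ => (x - x ^ 3) / 6)) y = -y := by
            rw [hw1]
            have h : HasDerivAt (fun x : ℝ => (1 - 3 * x ^ 2) / 6) (-y) y := by
              have := ((hasDerivAt_const y (1:ℝ)).sub
                ((hasDerivAt_pow 2 y).const_mul 3)).div_const 6
              convert! this using 1
              push_cast; ring
            exact h.deriv
          rw [hd2, hdd 0 y, hzero y, abs_of_nonneg hy.1.le]
          linarith
        · exact (hrec 0).2.1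
        · exact (hrec 0).2.2
        · norm_num
        · norm_num
      intro x hx
      calc |Λ 1 x| ≤ (x - x ^ 3) / 6 := step x hx
        _ ≤ Real.sin (π * x) / (3 * π) := cubic_le_sin hx.1 hx.2
        _ = 1 / (3 * π ^ (2 * 0 + 1)) * Real.sin (π * x) := by ring
    | succ m ih =>
      set C' : ℝ := 1 / (3 * π ^ (2 * (m + 1) + 1)) with hC'
      have hC'pos : 0 < C' := by positivity
      have hwd : ∀ y : ℝ, HasDerivAt (fun x => C' * Real.sin (π * x))
          (C' * (π * Real.cos (π * y))) y := by
        intro y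
        have h1 : HasDerivAt (fun x : ℝ => π * x) π y := by
          simpa using (hasDerivAt_id y).const_mul π
        have h2 := (Real.hasDerivAt_sin (π * y)).comp y h1
        have := h2.const_mul C'
        convert! this using 1
        ring
      have hwd2 : ∀ y : ℝ, HasDerivAt (fun x => C' * (π * Real.cos (π * x)))
          (-(C' * π ^ 2 * Real.sin (π * y))) y := by
        intro y
        have h1 : HasDerivAt (fun x : ℝ => π * x) π y := by
          simpa using (hasDerivAt_id y).const_mul π
        have h2 := (Real.hasDerivAt_cos (π * y)).comp y h1
        have := (h2.const_mul π).const_mul C'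
        convert! this using 1
        ring
      have hderiv1 : deriv (fun x => C' * Real.sin (π * x))
          = fun y => C' * (π * Real.cos (π * y)) := funext fun y => (hwd y).deriv
      have key : ∀ x ∈ Set.Icc (0:ℝ) 1, |Λ (m + 2) x| ≤ C' * Real.sin (π * x) := by
        apply abs_le_of_bvp (Λ (m + 2)) (fun x => C' * Real.sin (π * x))
          (hdiff (m + 2)).1 (hdiff (m + 2)).2
          (by fun_prop) (by rw [hderiv1]; fun_prop)
        · intro y hy
          have hd2 : deriv (deriv (fun x => C' * Real.sin (π * x))) y
              = -(C' * π ^ 2 * Real.sin (π * y)) := by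
            rw [hderiv1]; exact (hwd2 y).deriv
          rw [hd2, hdd (m + 1) y]
          have := ih y ⟨hy.1.le, hy.2.le⟩
          have hCeq : 1 / (3 * π ^ (2 * m + 1)) = C' * π ^ 2 := by
            rw [hC']
            rw [show 2 * (m + 1) + 1 = (2 * m + 1) + 2 by ring, pow_add]
            field_simp
            ring
          rw [hCeq] at this
          simp only [neg_neg]
          linarith [this]
        · exact (hrec (m + 1)).2.1
        · exact (hrec (m + 1)).2.2
        · simp
        · simp [Real.sin_pi]
      intro x hx
      simpa using key x hx
  obtain ⟨m, rfl⟩ : ∃ m, l = m + 1 := ⟨l - 1, by omega⟩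
  have h := main m x hx
  have hsin : Real.sin (π * x) ≤ 1 := Real.sin_le_one _
  have hpow : 2 * (m + 1) - 1 = 2 * m + 1 := by omega
  rw [hpow]
  calc |Λ (m + 1) x| ≤ 1 / (3 * π ^ (2 * m + 1)) * Real.sin (π * x) := h
    _ ≤ 1 / (3 * π ^ (2 * m + 1)) * 1 := by
        apply mul_le_mul_of_nonneg_left hsin (by positivity)
    _ = 1 / (3 * π ^ (2 * m + 1)) := mul_one _
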